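/- Let n ≥ 2. The abelian covering number of the dihedral group DihedralGroup (2^n) of order 2^(n+1) equals its powerful covering number; both are equal to 2^(n-1) + 1. -/

import Mathlib

open DihedralGroup
open scoped commutatorElement

/-- A finite `p`-group `H` is *powerful* if, when `p` is odd, `[H,H]` is contained in the
subgroup generated by `p`-th powers, and when `p = 2`, `[H,H]` is contained in the subgroup
generated by fourth powers. -/
def IsPowerful (p : ℕ) (H : Type*) [Group H] : Prop :=
  commutator H ≤ Subgroup.closure {x : H | ∃ g : H, x = g ^ (if p = 2 then 4 else p)}

/-- A cover of a group by proper subgroups. -/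
def IsSubgroupCover {G : Type*} [Group G] (S : Finset (Subgroup G)) : Prop :=
  (∀ H ∈ S, H ≠ ⊤) ∧ ∀ g : G, ∃ H ∈ S, g ∈ H

/-- The powerful covering number `σ_P(G)`: the least number of subgroups in a cover of `G`
by proper powerful subgroups. -/
noncomputable def powerfulCoveringNumber (p : ℕ) (G : Type*) [Group G] : ℕ :=
  sInf {n : ℕ | ∃ S : Finset (Subgroup G),
    S.card = n ∧ IsSubgroupCover S ∧ ∀ H ∈ S, IsPowerful p H}

/-- The abelian covering number `σ_A(G)`: the least number of subgroups in a cover of `G`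
by proper abelian subgroups. -/
noncomputable def abelianCoveringNumber (G : Type*) [Group G] : ℕ :=
  sInf {n : ℕ | ∃ S : Finset (Subgroup G),
    S.card = n ∧ IsSubgroupCover S ∧ ∀ H ∈ S, ∀ x ∈ H, ∀ y ∈ H, x * y = y * x}

namespace DCover
open DihedralGroup Subgroup
variable {n : ℕ}

lemma inv_sr' (i : ZMod (2^n)) : (sr i)⁻¹ = sr i := rfl
lemma inv_r' (i : ZMod (2^n)) : (r i)⁻¹ = r (-i) := rfl

lemma keyA (hn : 1 ≤ n) (H : Subgroup (DihedralGroup (2^n)))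
    (hP : ∀ c : ZMod (2^n), r c ∈ H → ∃ x, r x ∈ H ∧ 2*c = 4*x) :
    ∀ c : ZMod (2^n), r c ∈ H → 2*c = 0 := by
  have key : ∀ k : ℕ, ∀ c : ZMod (2^n), r c ∈ H → ∃ x, r x ∈ H ∧ 2*c = 2^(k+1)*x := by
    intro k
    induction k with
    | zero => intro c hc; exact ⟨c, hc, by ring⟩
    | succ k ih =>
      intro c hc
      obtain ⟨x, hx, hx2⟩ := ih c hc
      obtain ⟨y, hy, hy2⟩ := hP x hx
      refine ⟨y, hy, ?_⟩
      have h1 : (2:ZMod (2^n))^(k+1) * x = 2^k * (2*x) := by ring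
      rw [hx2, h1, hy2]; ring
  intro c hc
  obtain ⟨x, hx, h2⟩ := key (n-1) c hc
  have hn' : n - 1 + 1 = n := by omega
  rw [hn'] at h2
  have hz : (2:ZMod (2^n))^n = 0 := by
    have := ZMod.natCast_self (2^n)
    push_cast at this
    exact this
  rw [h2, hz, zero_mul]

/-- The subgroup of fourth powers of rotations of `H`. -/
def rotFour (H : Subgroup (DihedralGroup (2^n))) : Subgroup (DihedralGroup (2^n)) where
  carrier := {g | ∃ x, r x ∈ H ∧ g = r (4*x)}
  one_mem' := ⟨0, by rw [← one_def]; exact H.one_mem, by rw [one_def]; congr 1; ring⟩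
  mul_mem' := by
    rintro x y ⟨a, ha, rfl⟩ ⟨b, hb, rfl⟩
    exact ⟨a + b, by rw [← r_mul_r]; exact H.mul_mem ha hb, by rw [r_mul_r]; congr 1; ring⟩
  inv_mem' := by
    rintro x ⟨a, ha, rfl⟩
    exact ⟨-a, by rw [← inv_r']; exact H.inv_mem ha, by rw [inv_r']; congr 1; ring⟩

lemma keyB (H : Subgroup (DihedralGroup (2^n))) (hpow : IsPowerful 2 H)
    (a : ZMod (2^n)) (ha : sr a ∈ H) :
    ∀ c, r c ∈ H → ∃ x, r x ∈ H ∧ 2*c = 4*x := by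
  intro c hc
  have hac : sr (a + c) ∈ H := by
    have := H.mul_mem ha hc; rwa [sr_mul_r] at this
  have hle : Subgroup.closure {x : ↥H | ∃ g : ↥H, x = g ^ (if 2 = 2 then 4 else 2)}
      ≤ (rotFour H).comap H.subtype := by
    rw [Subgroup.closure_le]
    rintro x ⟨g, rfl⟩
    simp only [SetLike.mem_coe, Subgroup.mem_comap]
    show H.subtype (g ^ 4) ∈ rotFour H
    have e5 : H.subtype (g ^ 4) = (g : DihedralGroup (2^n)) ^ 4 := by simp
    rw [e5]
    obtain ⟨(w | w), hw⟩ := g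
    · refine ⟨w, hw, ?_⟩
      show (r w)^4 = r (4*w)
      rw [pow_succ, pow_succ, pow_succ, pow_one, r_mul_r, r_mul_r, r_mul_r]
      congr 1; ring
    · have h2 : (sr w : DihedralGroup (2^n))^4 = 1 := by
        have hsq : (sr w : DihedralGroup (2^n))^2 = 1 := by
          rw [sq, sr_mul_sr, sub_self, ← one_def]
        rw [show (4:ℕ) = 2*2 from rfl, pow_mul, hsq, one_pow]
      rw [h2]
      exact (rotFour H).one_mem
  set x : ↥H := ⟨sr a, ha⟩ with hxdef
  set y : ↥H := ⟨sr (a+c), hac⟩ with hydef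
  have hcomm : ⁅x, y⁆ ∈ commutator ↥H :=
    Subgroup.commutator_mem_commutator (Subgroup.mem_top x) (Subgroup.mem_top y)
  have hmem := hle (hpow hcomm)
  rw [Subgroup.mem_comap] at hmem
  have hval : H.subtype ⁅x, y⁆ = r (2*c) := by
    show ((⁅x, y⁆ : ↥H) : DihedralGroup (2^n)) = r (2*c)
    rw [commutatorElement_def]
    push_cast
    show sr a * sr (a+c) * (sr a)⁻¹ * (sr (a+c))⁻¹ = r (2*c)
    rw [inv_sr', inv_sr', sr_mul_sr, r_mul_sr, sr_mul_sr]
    congr 1; ring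
  rw [hval] at hmem
  obtain ⟨x', hx', hx2⟩ := hmem
  exact ⟨x', hx', by injection hx2⟩

lemma keyC (hn : 1 ≤ n) (H : Subgroup (DihedralGroup (2^n))) (hpow : IsPowerful 2 H)
    (a b : ZMod (2^n)) (ha : sr a ∈ H) (hb : sr b ∈ H) : 2*(b - a) = 0 := by
  apply keyA hn H (keyB H hpow a ha)
  have := H.mul_mem ha hb; rwa [sr_mul_sr] at this

lemma keyD (hn : 2 ≤ n) (H : Subgroup (DihedralGroup (2^n))) (hpow : IsPowerful 2 H)
    (a : ZMod (2^n)) (ha : sr a ∈ H) (h1 : r 1 ∈ H) : False := by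
  have h2 := keyA (by omega) H (keyB H hpow a ha) 1 h1
  rw [mul_one] at h2
  have h3 : ((2:ℕ) : ZMod (2^n)) = 0 := by exact_mod_cast h2
  haveI : NeZero (2^n) := ⟨pow_ne_zero n two_ne_zero⟩
  rw [ZMod.natCast_eq_zero_iff] at h3
  have h4 := Nat.le_of_dvd (by norm_num) h3
  have h5 : 2^2 ≤ 2^n := Nat.pow_le_pow_right (by norm_num) hn
  omega


lemma castinj {a b : ℕ} (ha : a < 2^n) (hb : b < 2^n)
    (h : ((a:ℕ) : ZMod (2^n)) = ((b:ℕ) : ZMod (2^n))) : a = b := by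
  have h2 := (ZMod.natCast_eq_natCast_iff a b (2^n)).mp h
  unfold Nat.ModEq at h2
  rwa [Nat.mod_eq_of_lt ha, Nat.mod_eq_of_lt hb] at h2

lemma pow_pred : 1 ≤ n → 2^(n-1) * 2 = 2^n := by
  intro hn; rw [← pow_succ]; congr 1; omega

lemma lowerBound (hn : 2 ≤ n) (S : Finset (Subgroup (DihedralGroup (2^n))))
    (hc : IsSubgroupCover S) (hp : ∀ H ∈ S, IsPowerful 2 H) :
    2^(n-1) + 1 ≤ S.card := by
  set N := 2^(n-1) with hN
  have hel : ∀ i : ℕ, ∃ H, H ∈ S ∧ (if i = N then r 1 else sr ((i:ℕ) : ZMod (2^n))) ∈ H := by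
    intro i
    obtain ⟨H, hH, hm⟩ := hc.2 _
    exact ⟨H, hH, hm⟩
  choose f hfS hfm using hel
  have hinj : Set.InjOn f (Finset.range (N+1)) := by
    intro i hi j hj hij
    simp only [Finset.coe_range, Set.mem_Iio] at hi hj
    by_contra hne
    have hmi := hfm i
    have hmj := hfm j
    rw [hij] at hmi
    rcases eq_or_ne i N with hiN | hiN
    · rcases eq_or_ne j N with hjN | hjN
      · omega
      · rw [if_pos hiN] at hmi
        rw [if_neg hjN] at hmj
        exact keyD hn (f j) (hp _ (hfS j)) _ hmj hmi
    · rcases eq_or_ne j N with hjN | hjN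
      · rw [if_neg hiN] at hmi
        rw [if_pos hjN] at hmj
        exact keyD hn (f j) (hp _ (hfS j)) _ hmi hmj
      · rw [if_neg hiN] at hmi
        rw [if_neg hjN] at hmj
        have h2 := keyC (by omega) (f j) (hp _ (hfS j)) _ _ hmi hmj
        -- 2*((j:ZMod) - i) = 0
        have hji : ((2*j:ℕ) : ZMod (2^n)) = ((2*i:ℕ) : ZMod (2^n)) := by
          push_cast
          linear_combination h2
        have hiN' : i < N := by omega
        have hjN' : j < N := by omega
        have h2n := pow_pred (n := n) (by omega)
        have := castinj (a := 2*j) (b := 2*i) (by omega) (by omega) hji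
        omega
  have hcard := Finset.card_le_card_of_injOn f (fun i hi => hfS i) hinj
  simpa using hcard


lemma r_inv (i : ZMod (2^n)) : (r i)⁻¹ = r (-i) := rfl
lemma sr_inv (i : ZMod (2^n)) : (sr i)⁻¹ = sr i := rfl

lemma hh (hn : 1 ≤ n) : (2^(n-1) : ZMod (2^n)) + (2^(n-1) : ZMod (2^n)) = 0 := by
  have h1 : ((2^(n-1) + 2^(n-1) : ℕ) : ZMod (2^n)) = ((2^n : ℕ) : ZMod (2^n)) := by
    congr 1
    have : 2^(n-1) * 2 = 2^n := by rw [← pow_succ]; congr 1; omega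
    omega
  rw [ZMod.natCast_self] at h1
  push_cast at h1
  exact h1

/-- Klein four-subgroup containing the reflections `sr i` and `sr (i + h)`. -/
def K (h i : ZMod (2^n)) (h0 : h + h = 0) : Subgroup (DihedralGroup (2^n)) where
  carrier := {g | g = r 0 ∨ g = r h ∨ g = sr i ∨ g = sr (i + h)}
  one_mem' := Or.inl one_def
  mul_mem' := by
    rintro x y (rfl|rfl|rfl|rfl) (rfl|rfl|rfl|rfl)
    · exact Or.inl ((r_mul_r _ _).trans (congrArg DihedralGroup.r (by linear_combination)))
    · exact Or.inr (Or.inl ((r_mul_r _ _).trans (congrArg DihedralGroup.r (by linear_combination))))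
    · exact Or.inr (Or.inr (Or.inl ((r_mul_sr _ _).trans (congrArg DihedralGroup.sr (by linear_combination)))))
    · exact Or.inr (Or.inr (Or.inr ((r_mul_sr _ _).trans (congrArg DihedralGroup.sr (by linear_combination)))))
    · exact Or.inr (Or.inl ((r_mul_r _ _).trans (congrArg DihedralGroup.r (by linear_combination))))
    · exact Or.inl ((r_mul_r _ _).trans (congrArg DihedralGroup.r (by linear_combination h0)))
    · exact Or.inr (Or.inr (Or.inr ((r_mul_sr _ _).trans (congrArg DihedralGroup.sr (by linear_combination -h0)))))
    · exact Or.inr (Or.inr (Or.inl ((r_mul_sr _ _).trans (congrArg DihedralGroup.sr (by linear_combination)))))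
    · exact Or.inr (Or.inr (Or.inl ((sr_mul_r _ _).trans (congrArg DihedralGroup.sr (by linear_combination)))))
    · exact Or.inr (Or.inr (Or.inr ((sr_mul_r _ _).trans (congrArg DihedralGroup.sr (by linear_combination)))))
    · exact Or.inl ((sr_mul_sr _ _).trans (congrArg DihedralGroup.r (by linear_combination)))
    · exact Or.inr (Or.inl ((sr_mul_sr _ _).trans (congrArg DihedralGroup.r (by linear_combination))))
    · exact Or.inr (Or.inr (Or.inr ((sr_mul_r _ _).trans (congrArg DihedralGroup.sr (by linear_combination)))))
    · exact Or.inr (Or.inr (Or.inl ((sr_mul_r _ _).trans (congrArg DihedralGroup.sr (by linear_combination h0)))))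
    · exact Or.inr (Or.inl ((sr_mul_sr _ _).trans (congrArg DihedralGroup.r (by linear_combination -h0))))
    · exact Or.inl ((sr_mul_sr _ _).trans (congrArg DihedralGroup.r (by linear_combination)))
  inv_mem' := by
    rintro x (rfl|rfl|rfl|rfl)
    · exact Or.inl ((r_inv _).trans (congrArg DihedralGroup.r (by linear_combination)))
    · exact Or.inr (Or.inl ((r_inv _).trans (congrArg DihedralGroup.r (by linear_combination -h0))))
    · exact Or.inr (Or.inr (Or.inl (sr_inv _)))
    · exact Or.inr (Or.inr (Or.inr (sr_inv _)))

lemma mem_K {h i : ZMod (2^n)} {h0 : h + h = 0} {g : DihedralGroup (2^n)} :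
    g ∈ K h i h0 ↔ (g = r 0 ∨ g = r h ∨ g = sr i ∨ g = sr (i + h)) :=
  Iff.rfl

lemma K_abelian (h i : ZMod (2^n)) (h0 : h + h = 0) :
    ∀ x ∈ K h i h0, ∀ y ∈ K h i h0, x * y = y * x := by
  intro x hx y hy
  rw [mem_K] at hx hy
  rcases hx with rfl|rfl|rfl|rfl <;> rcases hy with rfl|rfl|rfl|rfl
  · exact (r_mul_r _ _).trans ((congrArg DihedralGroup.r (by linear_combination)).trans (r_mul_r _ _).symm)
  · exact (r_mul_r _ _).trans ((congrArg DihedralGroup.r (by linear_combination)).trans (r_mul_r _ _).symm)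
  · exact (r_mul_sr _ _).trans ((congrArg DihedralGroup.sr (by linear_combination)).trans (sr_mul_r _ _).symm)
  · exact (r_mul_sr _ _).trans ((congrArg DihedralGroup.sr (by linear_combination)).trans (sr_mul_r _ _).symm)
  · exact (r_mul_r _ _).trans ((congrArg DihedralGroup.r (by linear_combination)).trans (r_mul_r _ _).symm)
  · exact (r_mul_r _ _).trans ((congrArg DihedralGroup.r (by linear_combination)).trans (r_mul_r _ _).symm)
  · exact (r_mul_sr _ _).trans ((congrArg DihedralGroup.sr (by linear_combination -h0)).trans (sr_mul_r _ _).symm)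
  · exact (r_mul_sr _ _).trans ((congrArg DihedralGroup.sr (by linear_combination -h0)).trans (sr_mul_r _ _).symm)
  · exact (sr_mul_r _ _).trans ((congrArg DihedralGroup.sr (by linear_combination)).trans (r_mul_sr _ _).symm)
  · exact (sr_mul_r _ _).trans ((congrArg DihedralGroup.sr (by linear_combination h0)).trans (r_mul_sr _ _).symm)
  · exact (sr_mul_sr _ _).trans ((congrArg DihedralGroup.r (by linear_combination)).trans (sr_mul_sr _ _).symm)
  · exact (sr_mul_sr _ _).trans ((congrArg DihedralGroup.r (by linear_combination h0)).trans (sr_mul_sr _ _).symm)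
  · exact (sr_mul_r _ _).trans ((congrArg DihedralGroup.sr (by linear_combination)).trans (r_mul_sr _ _).symm)
  · exact (sr_mul_r _ _).trans ((congrArg DihedralGroup.sr (by linear_combination h0)).trans (r_mul_sr _ _).symm)
  · exact (sr_mul_sr _ _).trans ((congrArg DihedralGroup.r (by linear_combination -h0)).trans (sr_mul_sr _ _).symm)
  · exact (sr_mul_sr _ _).trans ((congrArg DihedralGroup.r (by linear_combination)).trans (sr_mul_sr _ _).symm)


instance : NeZero (2^n) := ⟨pow_ne_zero n two_ne_zero⟩

/-- The rotation subgroup. -/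
def R : Subgroup (DihedralGroup (2^n)) := Subgroup.zpowers (r 1)

lemma r_mem_R (j : ZMod (2^n)) : r j ∈ (R : Subgroup (DihedralGroup (2^n))) := by
  refine ⟨(j.val : ℤ), ?_⟩
  show (r 1 : DihedralGroup (2^n)) ^ ((j.val : ℤ)) = r j
  rw [zpow_natCast, r_one_pow, ZMod.natCast_val, ZMod.cast_id]

lemma sr_not_mem_R (j : ZMod (2^n)) : sr j ∉ (R : Subgroup (DihedralGroup (2^n))) := by
  rintro ⟨k, hk'⟩
  have hk : (r 1 : DihedralGroup (2^n)) ^ k = sr j := hk'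
  clear hk'
  rcases k with k | k
  · rw [Int.ofNat_eq_coe, zpow_natCast, r_one_pow] at hk
    exact absurd hk (by simp)
  · rw [zpow_negSucc, r_one_pow] at hk
    have : (r ((k+1 : ℕ) : ZMod (2^n)))⁻¹ = r (-((k+1 : ℕ) : ZMod (2^n))) := rfl
    rw [this] at hk
    exact absurd hk (by simp)

lemma R_abelian : ∀ x ∈ (R : Subgroup (DihedralGroup (2^n))), ∀ y ∈ R, x * y = y * x := by
  rintro x ⟨a, rfl⟩ y ⟨b, rfl⟩
  rw [← zpow_add, ← zpow_add, add_comm]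

lemma R_ne_top : (R : Subgroup (DihedralGroup (2^n))) ≠ ⊤ := by
  intro h
  exact sr_not_mem_R 0 (h ▸ Subgroup.mem_top _)

lemma cast2pow : (((2^(n-1) : ℕ)) : ZMod (2^n)) = (2^(n-1) : ZMod (2^n)) := by push_cast; ring

lemma r_one_not_mem_K (hn : 2 ≤ n) (i : ZMod (2^n)) :
    r 1 ∉ K (2^(n-1)) i (hh (by omega)) := by
  intro hmem
  have h1 : (1:ℕ) < 2^n := by have : 2^2 ≤ 2^n := Nat.pow_le_pow_right two_pos hn; omega
  have h2 : 2^(n-1) < 2^n := Nat.pow_lt_pow_right one_lt_two (by omega)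
  rcases mem_K.mp hmem with h | h | h | h
  · have : (1:ℕ) = (0:ℕ) := castinj h1 (by positivity) (by exact_mod_cast (by injection h : (1 : ZMod (2^n)) = 0))
    omega
  · have he : ((1:ℕ) : ZMod (2^n)) = ((2^(n-1) : ℕ) : ZMod (2^n)) := by
      rw [cast2pow]; exact_mod_cast (by injection h : (1 : ZMod (2^n)) = 2^(n-1))
    have : (1:ℕ) = 2^(n-1) := castinj h1 h2 he
    have : 2 ≤ 2^(n-1) := by
      calc 2 = 2^1 := rfl
      _ ≤ 2^(n-1) := Nat.pow_le_pow_right two_pos (by omega)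
    omega
  · exact absurd h (by simp)
  · exact absurd h (by simp)

lemma sr_mem_K (hn : 1 ≤ n) (j : ZMod (2^n)) :
    sr j ∈ K (2^(n-1)) (((j.val % 2^(n-1) : ℕ)) : ZMod (2^n)) (hh hn) := by
  have hval : j = ((j.val % 2^(n-1) + 2^(n-1) * (j.val / 2^(n-1)) : ℕ) : ZMod (2^n)) := by
    rw [Nat.mod_add_div]
    exact (ZMod.natCast_rightInverse j).symm
  have hq : j.val / 2^(n-1) ≤ 1 := by
    have hlt : j.val < 2^n := ZMod.val_lt j
    have h2 : 2^(n-1) * 2 = 2^n := by rw [← pow_succ]; congr 1; omega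
    by_contra hq
    have : 2^(n-1) * 2 ≤ 2^(n-1) * (j.val / 2^(n-1)) := Nat.mul_le_mul_left _ (by omega)
    have := Nat.div_mul_le_self j.val (2^(n-1))
    have := Nat.mul_div_le j.val (2^(n-1))
    omega
  rw [mem_K]
  rcases Nat.le_one_iff_eq_zero_or_eq_one.mp hq with h | h
  · refine Or.inr (Or.inr (Or.inl ?_))
    rw [h, Nat.mul_zero, Nat.add_zero] at hval
    exact congrArg DihedralGroup.sr hval
  · refine Or.inr (Or.inr (Or.inr ?_))
    rw [h] at hval
    push_cast at hval
    rw [mul_one] at hval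
    exact congrArg DihedralGroup.sr hval

lemma K_inj (hn : 2 ≤ n) : Set.InjOn
    (fun i : ℕ => K (2^(n-1)) ((i : ℕ) : ZMod (2^n)) (hh (by omega)))
    (Finset.range (2^(n-1))) := by
  intro a ha b hb hab
  simp only [Finset.coe_range, Set.mem_Iio] at ha hb
  have h2 : 2^(n-1) < 2^n := Nat.pow_lt_pow_right one_lt_two (by omega)
  have hab' : K (2^(n-1)) ((a : ℕ) : ZMod (2^n)) (hh (by omega)) =
      K (2^(n-1)) ((b : ℕ) : ZMod (2^n)) (hh (by omega)) := hab
  have hmem : sr ((a : ℕ) : ZMod (2^n)) ∈ K (2^(n-1)) ((b : ℕ) : ZMod (2^n)) (hh (by omega)) := by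
    rw [← hab']; exact mem_K.mpr (Or.inr (Or.inr (Or.inl rfl)))
  have h2n : 2^(n-1)*2 = 2^n := by rw [← pow_succ]; congr 1; omega
  rcases mem_K.mp hmem with h | h | h | h
  · exact absurd h (by intro h'; cases h')
  · exact absurd h (by simp)
  · have h' : ((a:ℕ) : ZMod (2^n)) = ((b:ℕ) : ZMod (2^n)) := by injection h with h'
    have := castinj (by omega : a < 2^n) (by omega : b < 2^n) h'
    omega
  · have h' : ((a:ℕ) : ZMod (2^n)) = ((b:ℕ):ZMod (2^n)) + (2^(n-1) : ZMod (2^n)) := by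
      injection h with h'
    have he : ((a:ℕ) : ZMod (2^n)) = ((b + 2^(n-1) : ℕ) : ZMod (2^n)) := by
      push_cast
      exact h'
    have := castinj (by omega : a < 2^n) (by omega : b + 2^(n-1) < 2^n) he
    omega

lemma upperBound (hn : 2 ≤ n) :
    ∃ S : Finset (Subgroup (DihedralGroup (2^n))), S.card = 2^(n-1) + 1 ∧
      IsSubgroupCover S ∧ ∀ H ∈ S, ∀ x ∈ H, ∀ y ∈ H, x * y = y * x := by
  classical
  set Kf : ℕ → Subgroup (DihedralGroup (2^n)) :=
    fun i => K (2^(n-1)) ((i : ℕ) : ZMod (2^n)) (hh (by omega)) with hKf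
  refine ⟨insert R ((Finset.range (2^(n-1))).image Kf), ?_, ⟨?_, ?_⟩, ?_⟩
  · rw [Finset.card_insert_of_notMem, Finset.card_image_of_injOn (K_inj hn)]
    · simp
    · intro hmem
      obtain ⟨i, hi, hKi⟩ := Finset.mem_image.mp hmem
      have h1 : sr ((i:ℕ) : ZMod (2^n)) ∈ Kf i := mem_K.mpr (Or.inr (Or.inr (Or.inl rfl)))
      rw [hKi] at h1
      exact sr_not_mem_R _ h1
  · intro H hH
    rcases Finset.mem_insert.mp hH with rfl | hH
    · exact R_ne_top
    · obtain ⟨i, hi, rfl⟩ := Finset.mem_image.mp hH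
      intro htop
      exact r_one_not_mem_K hn _ (htop ▸ Subgroup.mem_top _)
  · rintro (j | j)
    · exact ⟨R, Finset.mem_insert_self _ _, r_mem_R j⟩
    · refine ⟨Kf (j.val % 2^(n-1)), ?_, ?_⟩
      · refine Finset.mem_insert_of_mem (Finset.mem_image.mpr ⟨j.val % 2^(n-1), ?_, rfl⟩)
        exact Finset.mem_range.mpr (Nat.mod_lt _ (by positivity))
      · exact sr_mem_K (by omega) j
  · intro H hH
    rcases Finset.mem_insert.mp hH with rfl | hH
    · exact R_abelian
    · obtain ⟨i, hi, rfl⟩ := Finset.mem_image.mp hH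
      exact K_abelian _ _ _

end DCover

open DihedralGroup Subgroup in
lemma abelian_isPowerful {G : Type*} [Group G] (p : ℕ) (H : Subgroup G)
    (hab : ∀ x ∈ H, ∀ y ∈ H, x * y = y * x) : IsPowerful p ↥H := by
  show commutator ↥H ≤ _
  rw [commutator_def]
  refine Subgroup.commutator_le.mpr ?_
  intro g _ h _
  have h1 : ⁅g, h⁆ = 1 := by
    rw [commutatorElement_eq_one_iff_mul_comm]
    exact Subtype.ext (by push_cast; exact hab _ g.2 _ h.2)
  rw [h1]
  exact Subgroup.one_mem _

/-- For `n ≥ 2`, the abelian covering number of `DihedralGroup (2^n)` equals its powerful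
covering number, and both equal `2^(n-1) + 1`. -/
theorem dihedral_abelian_eq_powerful_coveringNumber (n : ℕ) (hn : 2 ≤ n) :
    abelianCoveringNumber (DihedralGroup (2 ^ n)) =
        powerfulCoveringNumber 2 (DihedralGroup (2 ^ n)) ∧
      powerfulCoveringNumber 2 (DihedralGroup (2 ^ n)) = 2 ^ (n - 1) + 1 := by
  classical
  obtain ⟨S, hcard, hcov, hab⟩ := DCover.upperBound hn
  have hmemA : (2^(n-1)+1) ∈ {m : ℕ | ∃ S : Finset (Subgroup (DihedralGroup (2^n))),
      S.card = m ∧ IsSubgroupCover S ∧ ∀ H ∈ S, ∀ x ∈ H, ∀ y ∈ H, x * y = y * x} :=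
    ⟨S, hcard, hcov, hab⟩
  have hmemP : (2^(n-1)+1) ∈ {m : ℕ | ∃ S : Finset (Subgroup (DihedralGroup (2^n))),
      S.card = m ∧ IsSubgroupCover S ∧ ∀ H ∈ S, IsPowerful 2 H} :=
    ⟨S, hcard, hcov, fun H hH => abelian_isPowerful 2 H (hab H hH)⟩
  have hLBP : ∀ m ∈ {m : ℕ | ∃ S : Finset (Subgroup (DihedralGroup (2^n))),
      S.card = m ∧ IsSubgroupCover S ∧ ∀ H ∈ S, IsPowerful 2 H}, 2^(n-1)+1 ≤ m := by
    rintro m ⟨T, rfl, h2, h3⟩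
    exact DCover.lowerBound hn T h2 h3
  have hLBA : ∀ m ∈ {m : ℕ | ∃ S : Finset (Subgroup (DihedralGroup (2^n))),
      S.card = m ∧ IsSubgroupCover S ∧ ∀ H ∈ S, ∀ x ∈ H, ∀ y ∈ H, x * y = y * x},
      2^(n-1)+1 ≤ m := by
    rintro m ⟨T, rfl, h2, h3⟩
    exact DCover.lowerBound hn T h2 (fun H hH => abelian_isPowerful 2 H (h3 H hH))
  have habel : abelianCoveringNumber (DihedralGroup (2 ^ n)) = 2^(n-1)+1 := by
    unfold abelianCoveringNumber
    exact le_antisymm (Nat.sInf_le hmemA) (le_csInf ⟨_, hmemA⟩ hLBA)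
  have hpow : powerfulCoveringNumber 2 (DihedralGroup (2 ^ n)) = 2^(n-1)+1 := by
    unfold powerfulCoveringNumber
    exact le_antisymm (Nat.sInf_le hmemP) (le_csInf ⟨_, hmemP⟩ hLBP)
  exact ⟨habel.trans hpow.symm, hpow⟩
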